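/- Let γ > 1, p(v) = v^{-γ}, and v₊ > 0. There exist constants C, δ* > 0 such that for any 0 < δ < δ* and any v, w > 0 with |p(v) - p(w)| < δ and |p(w) - p(v₊)| < δ, the relative pressure satisfies p(v|w) ≤ ( (γ+1)/(2γ) · 1/p(w) + Cδ ) |p(v) - p(w)|², where p(v|w) = p(v) - p(w) - p'(w)(v-w). -/

import Mathlib

set_option maxHeartbeats 1000000

open Set


lemma rpow_sub_le_of_le {m q x y : ℝ} (hm : 0 < m) (hq : q < 0)
    (hx : m ≤ x) (hxy : x ≤ y) :
    x ^ q - y ^ q ≤ (-q) * m ^ (q - 1) * (y - x) := by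
  rcases eq_or_lt_of_le hxy with rfl | hlt
  · simp
  have hx0 : 0 < x := lt_of_lt_of_le hm hx
  have hcont : ContinuousOn (fun t : ℝ => t ^ q) (Icc x y) := fun t ht =>
    (Real.continuousAt_rpow_const t q
      (Or.inl (ne_of_gt (lt_of_lt_of_le hx0 ht.1)))).continuousWithinAt
  have hderiv : ∀ t ∈ Ioo x y, HasDerivAt (fun t : ℝ => t ^ q) (q * t ^ (q - 1)) t :=
    fun t ht => Real.hasDerivAt_rpow_const (Or.inl (ne_of_gt (lt_of_lt_of_le hx0 ht.1.le)))
  obtain ⟨c, hc, hceq⟩ :=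
    exists_hasDerivAt_eq_slope (fun t : ℝ => t ^ q) (fun t => q * t ^ (q - 1)) hlt hcont hderiv
  have hmc : m ≤ c := le_trans hx hc.1.le
  have hcb : c ^ (q - 1) ≤ m ^ (q - 1) :=
    Real.rpow_le_rpow_of_nonpos hm hmc (by linarith)
  have hne : y - x ≠ 0 := by intro h; nlinarith
  have h2 : x ^ q - y ^ q = (-q) * c ^ (q - 1) * (y - x) := by
    field_simp at hceq
    linear_combination hceq
  rw [h2]
  have h1 : (-q) * c ^ (q - 1) ≤ (-q) * m ^ (q - 1) :=
    mul_le_mul_of_nonneg_left hcb (by linarith)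
  exact mul_le_mul_of_nonneg_right h1 (by linarith)

lemma nonneg_of_quad {g g' : ℝ → ℝ} {l u b a : ℝ}
    (hb : b ∈ Icc l u) (ha : a ∈ Icc l u)
    (hg : ∀ x ∈ Icc l u, HasDerivAt g (g' x) x)
    (hmono : MonotoneOn g' (Icc l u))
    (h'b : g' b = 0) (hgb : g b = 0) : 0 ≤ g a := by
  rcases le_total a b with hab | hab
  · have hsub : Icc a b ⊆ Icc l u := Icc_subset_Icc ha.1 hb.2
    have hanti : AntitoneOn g (Icc a b) := by
      apply antitoneOn_of_deriv_nonpos (convex_Icc a b)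
      · exact fun x hx => (hg x (hsub hx)).continuousAt.continuousWithinAt
      · intro x hx
        rw [interior_Icc] at hx
        exact (hg x (hsub (Ioo_subset_Icc_self hx))).differentiableAt.differentiableWithinAt
      · intro x hx
        rw [interior_Icc] at hx
        rw [(hg x (hsub (Ioo_subset_Icc_self hx))).deriv]
        have := hmono (hsub (Ioo_subset_Icc_self hx)) hb hx.2.le
        linarith
    have := hanti (left_mem_Icc.2 hab) (right_mem_Icc.2 hab) hab
    linarith
  · have hsub : Icc b a ⊆ Icc l u := Icc_subset_Icc hb.1 ha.2
    have hmonog : MonotoneOn g (Icc b a) := by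
      apply monotoneOn_of_deriv_nonneg (convex_Icc b a)
      · exact fun x hx => (hg x (hsub hx)).continuousAt.continuousWithinAt
      · intro x hx
        rw [interior_Icc] at hx
        exact (hg x (hsub (Ioo_subset_Icc_self hx))).differentiableAt.differentiableWithinAt
      · intro x hx
        rw [interior_Icc] at hx
        rw [(hg x (hsub (Ioo_subset_Icc_self hx))).deriv]
        have := hmono hb (hsub (Ioo_subset_Icc_self hx)) hx.1.le
        linarith
    have := hmonog (left_mem_Icc.2 hab) (right_mem_Icc.2 hab) hab
    linarith


lemma core_est (γ p₀ : ℝ) (hγ : 1 < γ) (hp₀ : 0 < p₀) :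
    ∃ C > 0, ∀ δ : ℝ, 0 < δ → δ < p₀ / 4 → ∀ a b : ℝ,
      |a - b| < δ → |b - p₀| < δ →
      a - b + γ * b ^ ((γ + 1) / γ) * (a ^ (-(1 / γ)) - b ^ (-(1 / γ))) ≤
        ((γ + 1) / (2 * γ) * (1 / b) + C * δ) * (a - b) ^ 2 := by
  have hγ0 : (0 : ℝ) < γ := by linarith
  set e : ℝ := -(1 / γ) with he
  set s : ℝ := (γ + 1) / γ with hs
  have h1γ : 1 / γ ≤ 1 := by rw [div_le_one hγ0]; linarith
  have h1γ0 : 0 < 1 / γ := by positivity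
  have he0 : e < 0 := by rw [he]; linarith
  have he1 : -1 ≤ e := by rw [he]; linarith
  have hs0 : 0 < s := by rw [hs]; positivity
  set m : ℝ := p₀ / 2 with hm
  have hm0 : 0 < m := by rw [hm]; positivity
  set L : ℝ := (-(e - 2)) * m ^ (e - 2 - 1) with hL
  have hL0 : 0 < L := mul_pos (by linarith) (Real.rpow_pos_of_pos hm0 _)
  set B : ℝ := 2 * (3 * p₀ / 2) ^ s with hB
  have hB0 : 0 < B := mul_pos (by norm_num) (Real.rpow_pos_of_pos (by linarith) _)
  refine ⟨B * L / 2 + 1, by positivity, ?_⟩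
  intro δ hδ hδ4 a b hab hbp
  set C : ℝ := B * L / 2 + 1 with hC
  have hC0 : 0 < C := by positivity
  rw [abs_lt] at hab hbp
  have hb1 : p₀ - δ < b := by linarith [hbp.1]
  have hb2 : b < p₀ + δ := by linarith [hbp.2]
  have hmb : m < b - δ := by rw [hm]; linarith
  have hb0 : 0 < b := by linarith
  have ha_l : b - δ < a := by linarith [hab.1]
  have ha_u : a < b + δ := by linarith [hab.2]
  have hbu : b ≤ 3 * p₀ / 2 := by linarith
  set M : ℝ := (γ + 1) / γ * (1 / b) + 2 * C * δ with hM
  set G : ℝ → ℝ := fun x => M / 2 * (x - b) ^ 2 - (x - b + γ * b ^ s * (x ^ e - b ^ e)) with hG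
  set G' : ℝ → ℝ := fun x => M * (x - b) - (1 - b ^ s * x ^ (e - 1)) with hG'
  set l : ℝ := b - δ with hl
  set u : ℝ := b + δ with hu
  have hxpos : ∀ x ∈ Icc l u, m ≤ x := fun x hx => le_trans hmb.le hx.1
  have hγe : γ * e = -1 := by rw [he]; field_simp
  have hDG : ∀ x ∈ Icc l u, HasDerivAt G (G' x) x := by
    intro x hx
    have hx0 : x ≠ 0 := ne_of_gt (lt_of_lt_of_le hm0 (hxpos x hx))
    have h1 : HasDerivAt (fun x : ℝ => M / 2 * (x - b) ^ 2)
        (M / 2 * ((2 : ℕ) * (x - b) ^ (2 - 1) * 1)) x :=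
      (((hasDerivAt_id x).sub_const b).pow 2).const_mul _
    have h3 : HasDerivAt (fun x : ℝ => x ^ e) (e * x ^ (e - 1)) x :=
      Real.hasDerivAt_rpow_const (Or.inl hx0)
    have h2 : HasDerivAt (fun x : ℝ => x - b + γ * b ^ s * (x ^ e - b ^ e))
        (1 + γ * b ^ s * (e * x ^ (e - 1))) x :=
      ((hasDerivAt_id x).sub_const b).add ((h3.sub_const _).const_mul _)
    have h4 := h1.sub h2
    convert h4 using 1
    · rfl
    · rfl
    · rfl
    simp only [hG']
    push_cast
    linear_combination (b ^ s * x ^ (e - 1)) * hγe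
  have hDG' : ∀ x ∈ Icc l u, HasDerivAt G' (M - (1 - e) * b ^ s * x ^ (e - 2)) x := by
    intro x hx
    have hx0 : x ≠ 0 := ne_of_gt (lt_of_lt_of_le hm0 (hxpos x hx))
    have h3 : HasDerivAt (fun x : ℝ => x ^ (e - 1)) ((e - 1) * x ^ (e - 1 - 1)) x :=
      Real.hasDerivAt_rpow_const (Or.inl hx0)
    have h5 := (((hasDerivAt_id x).sub_const b).const_mul M).sub
      ((h3.const_mul (b ^ s)).const_sub 1)
    convert h5 using 1
    · rfl
    · rfl
    · rfl
    rw [show e - 1 - 1 = e - 2 by ring]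
    ring
  have hbq : (γ + 1) / γ * (1 / b) = (1 - e) * (b ^ s * b ^ (e - 2)) := by
    rw [← Real.rpow_add hb0, show s + (e - 2) = -1 by rw [hs, he]; field_simp; ring,
      Real.rpow_neg_one, he]
    field_simp
    ring
  have hG''nn : ∀ x ∈ Icc l u, 0 ≤ M - (1 - e) * b ^ s * x ^ (e - 2) := by
    intro x hx
    have hmx : m ≤ x := hxpos x hx
    have hLδ : 0 ≤ L * δ := by positivity
    have hdiff : x ^ (e - 2) - b ^ (e - 2) ≤ L * δ := by
      rcases le_total x b with hxb | hbx
      · have h6 := rpow_sub_le_of_le hm0 (by linarith : e - 2 < 0) hmx hxb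
        have hbx' : b - x ≤ δ := by
          have := hx.1; rw [hl] at this; linarith
        calc x ^ (e - 2) - b ^ (e - 2) ≤ (-(e - 2)) * m ^ (e - 2 - 1) * (b - x) := h6
          _ = L * (b - x) := by rw [hL]
          _ ≤ L * δ := mul_le_mul_of_nonneg_left hbx' hL0.le
      · have h7 : x ^ (e - 2) ≤ b ^ (e - 2) :=
          Real.rpow_le_rpow_of_nonpos hb0 hbx (by linarith)
        linarith
    have htB : (1 - e) * b ^ s ≤ B := by
      have h8 : b ^ s ≤ (3 * p₀ / 2) ^ s := Real.rpow_le_rpow hb0.le hbu hs0.le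
      calc (1 - e) * b ^ s ≤ 2 * (3 * p₀ / 2) ^ s :=
            mul_le_mul (by linarith) h8 (Real.rpow_nonneg hb0.le _) (by norm_num)
        _ = B := hB.symm
    have htnn : 0 ≤ (1 - e) * b ^ s :=
      mul_nonneg (by linarith) (Real.rpow_nonneg hb0.le _)
    have hkey : (1 - e) * b ^ s * (x ^ (e - 2) - b ^ (e - 2)) ≤ 2 * C * δ := by
      calc (1 - e) * b ^ s * (x ^ (e - 2) - b ^ (e - 2))
          ≤ (1 - e) * b ^ s * (L * δ) := mul_le_mul_of_nonneg_left hdiff htnn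
        _ ≤ B * (L * δ) := mul_le_mul_of_nonneg_right htB hLδ
        _ ≤ 2 * C * δ := by rw [hC]; nlinarith [hδ.le]
    rw [hM, hbq]
    linarith [hkey]
  have hmono : MonotoneOn G' (Icc l u) := by
    apply monotoneOn_of_deriv_nonneg (convex_Icc l u)
    · exact fun x hx => (hDG' x hx).continuousAt.continuousWithinAt
    · intro x hx
      rw [interior_Icc] at hx
      exact (hDG' x (Ioo_subset_Icc_self hx)).differentiableAt.differentiableWithinAt
    · intro x hx
      rw [interior_Icc] at hx
      rw [(hDG' x (Ioo_subset_Icc_self hx)).deriv]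
      exact hG''nn x (Ioo_subset_Icc_self hx)
  have hbmem : b ∈ Icc l u := ⟨by rw [hl]; linarith, by rw [hu]; linarith⟩
  have hamem : a ∈ Icc l u := ⟨by rw [hl]; linarith, by rw [hu]; linarith⟩
  have h'b : G' b = 0 := by
    simp only [hG']
    have h9 : b ^ s * b ^ (e - 1) = 1 := by
      rw [← Real.rpow_add hb0, show s + (e - 1) = 0 by rw [hs, he]; field_simp; ring,
        Real.rpow_zero]
    rw [h9]; ring
  have hgb : G b = 0 := by simp only [hG]; ring
  have hga := nonneg_of_quad hbmem hamem hDG hmono h'b hgb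
  simp only [hG] at hga
  have hM2 : (γ + 1) / (2 * γ) * (1 / b) + C * δ = M / 2 := by rw [hM]; ring
  rw [hM2]
  linarith [hga]


/-- Pressure `p(v) = v^{-γ}`. -/
noncomputable def pγ (γ v : ℝ) : ℝ := v ^ (-γ)

/-- Relative pressure `p(v|w) = p(v) - p(w) - p'(w)(v-w)` with `p'(w) = -γ w^{-γ-1}`. -/
noncomputable def prel (γ v w : ℝ) : ℝ := pγ γ v - pγ γ w - (-γ * w ^ (-γ - 1)) * (v - w)

/-- Sharp quadratic upper bound on the relative pressure in terms of the
pressure difference, with leading coefficient `(γ+1)/(2γ p(w))`. -/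
theorem rel_pressure_sharp_upper (γ vplus : ℝ) (hγ : 1 < γ) (hvplus : 0 < vplus) :
    ∃ C > 0, ∃ δstar > 0, ∀ δ : ℝ, 0 < δ → δ < δstar →
      ∀ v w : ℝ, 0 < v → 0 < w →
        |pγ γ v - pγ γ w| < δ → |pγ γ w - pγ γ vplus| < δ →
        prel γ v w ≤ ((γ + 1) / (2 * γ) * (1 / pγ γ w) + C * δ) * (pγ γ v - pγ γ w) ^ 2 := by
  have hγ0 : (0 : ℝ) < γ := by linarith
  have hγne : γ ≠ 0 := ne_of_gt hγ0
  obtain ⟨C, hC, hcore⟩ := core_est γ (vplus ^ (-γ)) hγ (Real.rpow_pos_of_pos hvplus _)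
  refine ⟨C, hC, vplus ^ (-γ) / 4, by positivity, ?_⟩
  intro δ hδ hδs v w hv hw hvw hwp
  simp only [pγ] at hvw hwp ⊢
  have h := hcore δ hδ hδs (v ^ (-γ)) (w ^ (-γ)) hvw hwp
  have e1 : ((w : ℝ) ^ (-γ)) ^ ((γ + 1) / γ) = w ^ (-γ - 1) := by
    rw [← Real.rpow_mul hw.le]
    congr 1
    field_simp
    ring
  have e2 : ((v : ℝ) ^ (-γ)) ^ (-(1 / γ)) = v := by
    rw [← Real.rpow_mul hv.le, show -γ * -(1 / γ) = 1 by field_simp, Real.rpow_one]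
  have e3 : ((w : ℝ) ^ (-γ)) ^ (-(1 / γ)) = w := by
    rw [← Real.rpow_mul hw.le, show -γ * -(1 / γ) = 1 by field_simp, Real.rpow_one]
  rw [e1, e2, e3] at h
  simp only [prel, pγ]
  have heq : v ^ (-γ) - w ^ (-γ) - -γ * w ^ (-γ - 1) * (v - w)
      = v ^ (-γ) - w ^ (-γ) + γ * w ^ (-γ - 1) * (v - w) := by ring
  rw [heq]
  exact h
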